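/- Let f : X^n → X be monotone, with all f-wild sets f-insane, and for i ≠ j let f^(i,j) be obtained from f by replacing the i-th argument by the j-th. Then for every f-wild A ⊆ {1,...,n}: if i ∉ A then A is f^(i,j)-insane, and if j ∈ A then A is f^(i,j)-insane. -/
import Mathlib


open Cardinal

/-- `A` is `(f,a)`-wild. -/
def WildFor {X : Type*} {n : ℕ} (f : (Fin n → X) → X) (A : Set (Fin n)) (a : Fin n → X) : Prop :=
  #{y : X | ∃ x : Fin n → X, (∀ i, i ∉ A → x i = a i) ∧ f x = y} = #X

/-- `A` is `f`-wild: `(f,a)`-wild for some `a`. -/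
def Wild {X : Type*} {n : ℕ} (f : (Fin n → X) → X) (A : Set (Fin n)) : Prop :=
  ∃ a : Fin n → X, WildFor f A a
/-- `A` is `f`-insane: `(f,a)`-wild for every `a`. -/
def Insane {X : Type*} {n : ℕ} (f : (Fin n → X) → X) (A : Set (Fin n)) : Prop :=
  ∀ a : Fin n → X, WildFor f A a

/-- For monotone `f` all of whose wild sets are insane, and `f^(i,j)` obtained by
replacing the `i`-th argument by the `j`-th: every `f`-wild `A` is `f^(i,j)`-insane
provided `i ∉ A` or `j ∈ A`. -/
theorem replace_arg_insane {X : Type*} [LinearOrder X] [WellFoundedLT X]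
    (hreg : (#X).IsRegular) (hbdd : ∀ s : Set X, BddAbove s ↔ #s < #X)
    {n : ℕ} (f : (Fin n → X) → X) (hmono : Monotone f)
    (hins : ∀ A : Set (Fin n), Wild f A → Insane f A)
    (i j : Fin n) (hij : i ≠ j) (A : Set (Fin n)) (hA : Wild f A) :
    (i ∉ A → Insane (fun x => f (Function.update x i (x j))) A) ∧
    (j ∈ A → Insane (fun x => f (Function.update x i (x j))) A) := by
  have hbot : ∀ s : Set X, #s = #X → ¬ BddAbove s := by
    intro s hs hb
    rw [hbdd, hs] at hb
    exact lt_irrefl _ hb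
  have hcard : ∀ s : Set X, ¬ BddAbove s → #s = #X := by
    intro s hs
    refine le_antisymm (Cardinal.mk_set_le s) ?_
    by_contra h
    exact hs ((hbdd s).mpr (not_le.mp h))
  -- the `j ∈ A` case (works whether or not `i ∈ A`)
  have keyJ : j ∈ A → Insane (fun x => f (Function.update x i (x j))) A := by
    intro hj a
    have hf := hins A hA a
    unfold WildFor at hf ⊢
    apply hcard
    intro hb
    obtain ⟨c, hc⟩ := hb
    have : c ∈ upperBounds {y : X | ∃ x : Fin n → X, (∀ k, k ∉ A → x k = a k) ∧ f x = y} := by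
      rintro y ⟨x, hx, rfl⟩
      set m := max (x i) (x j) with hm
      set x' : Fin n → X := Function.update x j m with hx'
      have houtside : ∀ k, k ∉ A → x' k = a k := by
        intro k hk
        rw [hx', Function.update_of_ne (by rintro rfl; exact hk hj)]
        exact hx k hk
      have hle : x ≤ Function.update x' i (x' j) := by
        intro k
        rcases eq_or_ne k i with rfl | hki
        · rw [Function.update_self, hx', Function.update_self]
          exact le_max_left _ _
        · rw [Function.update_of_ne hki, hx']
          rcases eq_or_ne k j with rfl | hkj
          · rw [Function.update_self]
            exact le_max_right _ _
          · rw [Function.update_of_ne hkj]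
      have hmem : f (Function.update x' i (x' j)) ∈
          {y : X | ∃ x : Fin n → X, (∀ k, k ∉ A → x k = a k) ∧
            (fun x => f (Function.update x i (x j))) x = y} :=
        ⟨x', houtside, rfl⟩
      exact le_trans (hmono hle) (hc hmem)
    exact hbot _ hf ⟨c, this⟩
  refine ⟨?_, keyJ⟩
  intro hi a
  by_cases hj : j ∈ A
  · exact keyJ hj a
  -- case i ∉ A, j ∉ A : direct set equality
  unfold WildFor
  have hset : {y : X | ∃ x : Fin n → X, (∀ k, k ∉ A → x k = a k) ∧
      (fun x => f (Function.update x i (x j))) x = y} =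
      {y : X | ∃ x : Fin n → X, (∀ k, k ∉ A → x k = Function.update a i (a j) k) ∧ f x = y} := by
    ext y
    constructor
    · rintro ⟨x, hx, rfl⟩
      refine ⟨Function.update x i (x j), ?_, rfl⟩
      intro k hk
      rcases eq_or_ne k i with rfl | hki
      · rw [Function.update_self, Function.update_self, hx j hj]
      · rw [Function.update_of_ne hki, Function.update_of_ne hki]
        exact hx k hk
    · rintro ⟨x, hx, rfl⟩
      refine ⟨Function.update x i (a i), ?_, ?_⟩
      · intro k hk
        rcases eq_or_ne k i with rfl | hki
        · rw [Function.update_self]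
        · rw [Function.update_of_ne hki]
          rw [hx k hk, Function.update_of_ne hki]
      · simp only []
        congr 1
        funext k
        rcases eq_or_ne k i with rfl | hki
        · rw [Function.update_self, Function.update_of_ne (Ne.symm hij), hx j hj,
            hx k hi, Function.update_of_ne (Ne.symm hij), Function.update_self]
        · rw [Function.update_of_ne hki, Function.update_of_ne hki]
    -- end set equality
  rw [hset]
  exact hins A hA (Function.update a i (a j))
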